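/- In the sink-popping repair construction, the resulting orientation σ_fix is sink-free: if σ is an orientation of a connected non-tree graph G with unique sink v, v' is a neighbour of v, and σ_fix is obtained from σ by flipping the chosen path v_ℓ = u, …, v₀ = v' in the unicyclic subgraph (V, R) and then flipping the edge (v, v'), then no vertex is a sink under σ_fix. -/

import Mathlib

/-- Sink-popping repair: let `G` be a connected graph that is not a tree, `R ≤ G` a
spanning unicyclic subgraph (`|R| = |V|`), and `σ` an orientation of `G` whose
unique sink is `v`.  Let `v'` be a neighbour of `v`, and let
`vs = [v₀ = v', v₁, …, v_ℓ = u]` be the chosen path in `(V, R)` from `v'` to the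
good vertex `u` (a vertex with two outgoing `R`-arcs, the closest one to `v'`, so
that no interior vertex of the path is good, and the first path edge points toward
`v'` unless `v₁ = v`).  The repaired orientation `σfix`, obtained by flipping every
edge of the path and then flipping the edge `(v, v')`, is sink-free. -/
theorem sink_popping_repair_sink_free {V : Type*} [Fintype V] [DecidableEq V]
    (G : SimpleGraph V) (hG : G.Connected)
    (R : SimpleGraph V) [DecidableRel R.Adj] (hRG : R ≤ G)
    (hRcard : R.edgeFinset.card = Fintype.card V) (hRconn : R.Connected)
    (σ : V → V → Prop)
    (hsub : ∀ a b, σ a b → G.Adj a b)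
    (hor : ∀ a b, G.Adj a b → (σ a b ↔ ¬ σ b a))
    (v : V) (hsink : ∀ x, ¬ σ v x) (huniq : ∀ w, (∀ x, ¬ σ w x) → w = v)
    (v' u : V) (hadj : G.Adj v v')
    (vs : List V)
    (hhead : vs.head? = some v') (hlast : vs.getLast? = some u)
    (hnodup : vs.Nodup) (hchain : List.Chain' R.Adj vs)
    (hvv' : v ≠ v')
    (hu_good : ∃ a b, a ≠ b ∧ R.Adj u a ∧ R.Adj u b ∧ σ u a ∧ σ u b)
    (hinterior : ∀ x ∈ vs, x ≠ v' → x ≠ u →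
      ¬ ∃ a b, a ≠ b ∧ R.Adj x a ∧ R.Adj x b ∧ σ x a ∧ σ x b)
    (hfirst : ∀ v₁ ∈ vs[1]?, v₁ ≠ v → σ v₁ v')
    (σfix : V → V → Prop)
    (hσfix : ∀ a b, σfix a b ↔
      ((Xor' (s(a, b) ∈ List.zipWith (fun p q => s(p, q)) vs vs.tail)
          (s(a, b) = s(v, v'))) ∧ σ b a) ∨
      (¬ (Xor' (s(a, b) ∈ List.zipWith (fun p q => s(p, q)) vs vs.tail)
          (s(a, b) = s(v, v'))) ∧ σ a b)) :
    ∀ w : V, ∃ x : V, σfix w x := by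
  have hne : vs ≠ [] := by intro h; rw [h] at hhead; simp at hhead
  have hnpos : 0 < vs.length := List.length_pos_iff.mpr hne
  have h0 : vs[0]'hnpos = v' := by
    rw [List.head?_eq_head hne, List.head_eq_getElem] at hhead
    exact Option.some.inj hhead
  have hlast' : vs[vs.length - 1]'(by omega) = u := by
    rw [List.getLast?_eq_getLast hne, List.getLast_eq_getElem] at hlast
    exact Option.some.inj hlast
  have hchain' : ∀ i (h : i + 1 < vs.length),
      R.Adj (vs[i]'(by omega)) (vs[i+1]'h) := by
    intro i h
    have := List.isChain_iff_getElem.mp hchain i (by omega)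
    simpa using this
  have hinj : ∀ i j (hi : i < vs.length) (hj : j < vs.length),
      vs[i]'hi = vs[j]'hj → i = j := by
    intro i j hi hj he
    exact (hnodup.getElem_inj_iff).mp he
  have hmemzl : ∀ e : Sym2 V, e ∈ List.zipWith (fun p q => s(p, q)) vs vs.tail ↔
      ∃ i, ∃ h : i + 1 < vs.length, e = s(vs[i]'(by omega), vs[i+1]'h) := by
    intro e
    rw [List.mem_iff_getElem]
    constructor
    · rintro ⟨i, hi, he⟩
      have hi' : i + 1 < vs.length := by
        simp only [List.length_zipWith, List.length_tail, lt_min_iff] at hi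
        omega
      refine ⟨i, hi', ?_⟩
      rw [← he, List.getElem_zipWith, List.getElem_tail]
    · rintro ⟨i, hi, he⟩
      have hlen : i < (List.zipWith (fun p q => s(p, q)) vs vs.tail).length := by
        simp only [List.length_zipWith, List.length_tail, lt_min_iff]
        omega
      exact ⟨i, hlen, by rw [List.getElem_zipWith, List.getElem_tail]; exact he.symm⟩
  have huv : u ≠ v := by
    rintro rfl
    obtain ⟨a, b, -, -, -, ha, -⟩ := hu_good
    exact hsink a ha
  -- the backward orientation of the path edges beyond the first
  have aux : ∀ i (h : i + 2 < vs.length),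
      ¬ σ (vs[i+1]'(by omega)) (vs[i+2]'h) := by
    intro i
    induction i with
    | zero =>
      intro h hcon
      by_cases h1 : vs[1]'(by omega) = v
      · exact hsink _ (h1 ▸ hcon)
      · have h1m : vs[1]'(by omega) ∈ vs[1]? :=
          Option.mem_def.mpr (List.getElem?_eq_getElem (by omega))
        have hσ10 : σ (vs[1]'(by omega)) v' := hfirst _ h1m h1
        refine hinterior (vs[1]'(by omega)) (List.getElem_mem _) ?_ ?_
          ⟨v', vs[2]'h, ?_, ?_, ?_, hσ10, hcon⟩
        · intro he
          rw [← h0] at he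
          have := hinj 1 0 (by omega) hnpos he
          omega
        · intro he
          rw [← hlast'] at he
          have := hinj 1 (vs.length - 1) (by omega) (by omega) he
          omega
        · intro he
          rw [← h0] at he
          have := hinj 0 2 hnpos (by omega) he
          omega
        · have := (hchain' 0 (by omega)).symm
          rwa [h0] at this
        · exact hchain' 1 h
    | succ i ih =>
      intro h hcon
      by_cases hv2 : vs[i+2]'(by omega) = v
      · exact hsink _ (hv2 ▸ hcon)
      · have hprev : σ (vs[i+2]'(by omega)) (vs[i+1]'(by omega)) :=
          (hor _ _ (hRG (hchain' (i+1) (by omega))).symm).mpr (ih (by omega))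
        refine hinterior (vs[i+2]'(by omega)) (List.getElem_mem _) ?_ ?_
          ⟨vs[i+1]'(by omega), vs[i+3]'(by omega), ?_, ?_, ?_, hprev, hcon⟩
        · intro he
          rw [← h0] at he
          have := hinj (i+2) 0 (by omega) hnpos he
          omega
        · intro he
          rw [← hlast'] at he
          have := hinj (i+2) (vs.length - 1) (by omega) (by omega) he
          omega
        · intro he
          have := hinj (i+1) (i+3) (by omega) (by omega) he
          omega
        · exact (hchain' (i+1) (by omega)).symm
        · exact hchain' (i+2) (by omega)
  intro w
  by_cases hwv : w = v
  · subst hwv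
    by_cases hvmem : w ∈ vs
    · obtain ⟨i, hi, hvi⟩ := List.mem_iff_getElem.mp hvmem
      have hi0 : i ≠ 0 := by
        intro h; subst h; rw [h0] at hvi; exact hvv' hvi.symm
      have hilast : i ≠ vs.length - 1 := by
        intro h; subst h; rw [hlast'] at hvi; exact huv hvi
      have hi1 : i + 1 < vs.length := by omega
      refine ⟨vs[i+1]'hi1, ?_⟩
      rw [hσfix]
      left
      constructor
      · refine Or.inl ⟨(hmemzl _).mpr ⟨i, hi1, by rw [hvi]⟩, ?_⟩
        intro he
        rcases Sym2.eq_iff.mp he with ⟨-, h2⟩ | ⟨h1, -⟩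
        · rw [← h0] at h2
          have := hinj (i+1) 0 hi1 hnpos h2
          omega
        · exact hvv' h1
      · have hGa : G.Adj w (vs[i+1]'hi1) := by
          have := hRG (hchain' i hi1); rwa [hvi] at this
        exact (hor _ _ hGa.symm).mpr (hsink _)
    · refine ⟨v', ?_⟩
      rw [hσfix]
      left
      refine ⟨Or.inr ⟨rfl, ?_⟩, (hor v' w hadj.symm).mpr (hsink v')⟩
      intro hmem
      obtain ⟨j, hj, he⟩ := (hmemzl _).mp hmem
      rcases Sym2.eq_iff.mp he with ⟨h1, -⟩ | ⟨h1, -⟩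
      · exact hvmem (by rw [h1]; exact List.getElem_mem _)
      · exact hvmem (by rw [h1]; exact List.getElem_mem _)
  · by_cases hwmem : w ∈ vs
    · obtain ⟨i, hi, hwi⟩ := List.mem_iff_getElem.mp hwmem
      by_cases hiu : i = vs.length - 1
      · subst hiu
        have hwu : w = u := hwi.symm.trans hlast'
        obtain ⟨a, b, hab, hRa, hRb, hsa, hsb⟩ := hu_good
        by_cases hn1 : vs.length = 1
        · have hc : ∃ c, σ u c ∧ c ≠ v := by
            by_cases ha : a = v
            · exact ⟨b, hsb, by rw [← ha]; exact fun hh => hab hh.symm⟩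
            · exact ⟨a, hsa, ha⟩
          obtain ⟨c, hsc, hcv⟩ := hc
          refine ⟨c, ?_⟩
          rw [hσfix]
          right
          refine ⟨?_, by rw [hwu]; exact hsc⟩
          intro hx
          rcases hx with ⟨hin, -⟩ | ⟨heq, -⟩
          · obtain ⟨j, hj, -⟩ := (hmemzl _).mp hin
            omega
          · rcases Sym2.eq_iff.mp heq with ⟨h1, -⟩ | ⟨-, h2⟩
            · exact hwv h1
            · exact hcv h2
        · have hc : ∃ c, σ u c ∧ c ≠ vs[vs.length - 2]'(by omega) := by
            by_cases ha : a = vs[vs.length - 2]'(by omega)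
            · exact ⟨b, hsb, by rw [← ha]; exact fun hh => hab hh.symm⟩
            · exact ⟨a, hsa, ha⟩
          obtain ⟨c, hsc, hcp⟩ := hc
          refine ⟨c, ?_⟩
          rw [hσfix]
          right
          refine ⟨?_, by rw [hwu]; exact hsc⟩
          intro hx
          rcases hx with ⟨hin, -⟩ | ⟨heq, -⟩
          · obtain ⟨j, hj, he⟩ := (hmemzl _).mp hin
            rcases Sym2.eq_iff.mp he with ⟨h1, -⟩ | ⟨h1, h2⟩
            · rw [← hwi] at h1
              have := hinj (vs.length - 1) j (by omega) (by omega) h1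
              omega
            · rw [← hwi] at h1
              have hj' := hinj (vs.length - 1) (j+1) (by omega) hj h1
              have hj2 : j = vs.length - 2 := by omega
              subst hj2
              exact hcp h2
          · rcases Sym2.eq_iff.mp heq with ⟨h1, -⟩ | ⟨h1, -⟩
            · exact hwv h1
            · rw [← hwi, ← h0] at h1
              have := hinj (vs.length - 1) 0 (by omega) hnpos h1
              omega
      · have hi1 : i + 1 < vs.length := by omega
        by_cases hi0 : i = 0
        · subst hi0
          have hwv' : w = v' := hwi.symm.trans h0
          by_cases h1v : vs[1]'hi1 = v
          · refine ⟨v, ?_⟩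
            rw [hσfix]
            right
            constructor
            · intro hx
              rcases hx with ⟨-, hb⟩ | ⟨hb, ha⟩
              · exact hb (by rw [hwv']; exact Sym2.eq_swap)
              · exact ha ((hmemzl _).mpr ⟨0, hi1, by rw [hwi, h1v]⟩)
            · rw [hwv']
              exact (hor v' v hadj.symm).mpr (hsink v')
          · refine ⟨vs[1]'hi1, ?_⟩
            rw [hσfix]
            left
            constructor
            · refine Or.inl ⟨(hmemzl _).mpr ⟨0, hi1, by rw [hwi]⟩, ?_⟩
              intro he
              rcases Sym2.eq_iff.mp he with ⟨h1, -⟩ | ⟨-, h2⟩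
              · exact hwv h1
              · exact h1v h2
            · rw [hwv']
              exact hfirst _ (Option.mem_def.mpr (List.getElem?_eq_getElem hi1)) h1v
        · obtain ⟨j, rfl⟩ : ∃ j, i = j + 1 := ⟨i - 1, by omega⟩
          have hprev : ¬ σ w (vs[j+2]'(by omega)) := by
            have := aux j (by omega)
            rwa [hwi] at this
          refine ⟨vs[j+2]'(by omega), ?_⟩
          rw [hσfix]
          left
          constructor
          · refine Or.inl ⟨(hmemzl _).mpr ⟨j+1, by omega, by rw [hwi]⟩, ?_⟩
            intro he
            rcases Sym2.eq_iff.mp he with ⟨h1, -⟩ | ⟨h1, -⟩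
            · exact hwv h1
            · rw [← hwi, ← h0] at h1
              have := hinj (j+1) 0 hi hnpos h1
              omega
          · have hGa : G.Adj w (vs[j+2]'(by omega)) := by
              have := hRG (hchain' (j+1) (by omega)); rwa [hwi] at this
            exact (hor _ _ hGa.symm).mpr hprev
    · have hex : ∃ x, σ w x := by
        by_contra hno
        push_neg at hno
        exact hwv (huniq w hno)
      obtain ⟨x, hx⟩ := hex
      refine ⟨x, ?_⟩
      rw [hσfix]
      right
      refine ⟨?_, hx⟩
      intro hxor
      rcases hxor with ⟨hin, -⟩ | ⟨heq, -⟩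
      · obtain ⟨j, hj, he⟩ := (hmemzl _).mp hin
        rcases Sym2.eq_iff.mp he with ⟨h1, -⟩ | ⟨h1, -⟩
        · exact hwmem (by rw [h1]; exact List.getElem_mem _)
        · exact hwmem (by rw [h1]; exact List.getElem_mem _)
      · rcases Sym2.eq_iff.mp heq with ⟨h1, -⟩ | ⟨h1, -⟩
        · exact hwv h1
        · exact hwmem (by rw [h1, ← h0]; exact List.getElem_mem _)
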